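/- At every minimizer (t*, p*, y*) of the joint routing problem, for every energy link q with start node n and end node m, and for all data links l outgoing from n and k outgoing from m with p*_l > 0, t*_l > 0, p*_k > 0 and t*_k > 0, one has g_l(p*_l) ≥ α_q · g_k(p*_k), with equality whenever y*_q > 0; here g_l(p) = (t*_l/(2σ_l)) · ((1/2)·ln(1 + p/σ_l) − t*_l)^{−2} · (1 + p/σ_l)^{−1}. -/

import Mathlib

open BigOperators ENNReal

/-- The joint routing problem: nodes `N`, data links `L` (start node, end node, noise
power `σ l > 0`), energy links `Q` (start node, end node, efficiency `α q ∈ (0,1]`),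
harvested energies `E n ≥ 0`, designated destination nodes `dest`, and exogenous
arrivals `s n ≥ 0` at non-destination nodes. -/
structure JNet where
  N : Type
  L : Type
  Q : Type
  [fintypeN : Fintype N]
  [fintypeL : Fintype L]
  [fintypeQ : Fintype Q]
  [decEqN : DecidableEq N]
  startD : L → N
  endD : L → N
  startE : Q → N
  endE : Q → N
  α : Q → ℝ
  σ : L → ℝ
  E : N → ℝ
  dest : N → Prop
  [decDest : DecidablePred dest]
  s : N → ℝ
  hα : ∀ q, 0 < α q ∧ α q ≤ 1
  hσ : ∀ l, 0 < σ l
  hE : ∀ n, 0 ≤ E n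
  hs : ∀ n, ¬ dest n → 0 ≤ s n

attribute [instance] JNet.fintypeN JNet.fintypeL JNet.fintypeQ JNet.decEqN JNet.decDest

/-- A triple `(t, p, y)` is feasible: nonnegative flows, capacity constraints
`p_l ≥ σ_l (e^{2 t_l} − 1)`, nonnegative energy transfers, the energy constraint at
every node, and flow conservation at every non-destination node. -/
def JNet.Feasible (net : JNet) (t p : net.L → ℝ) (y : net.Q → ℝ) : Prop :=
  (∀ l, 0 ≤ t l) ∧
  (∀ l, net.σ l * (Real.exp (2 * t l) - 1) ≤ p l) ∧
  (∀ q, 0 ≤ y q) ∧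
  (∀ n : net.N,
    (∑ l ∈ Finset.univ.filter (fun l => net.startD l = n), p l) +
      (∑ q ∈ Finset.univ.filter (fun q => net.startE q = n), y q) ≤
    net.E n + ∑ q ∈ Finset.univ.filter (fun q => net.endE q = n), net.α q * y q) ∧
  (∀ n : net.N, ¬ net.dest n →
    (∑ l ∈ Finset.univ.filter (fun l => net.startD l = n), t l) -
      (∑ l ∈ Finset.univ.filter (fun l => net.endD l = n), t l) = net.s n)

/-- The delay `h(p, t) = t / ((1/2)·ln(1 + p/σ) − t)` on a single link, taken to
be `0` when `t = 0` and `+∞` when `t > 0` and `(1/2)·ln(1 + p/σ) ≤ t`. -/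
noncomputable def linkDelay (σ p t : ℝ) : ℝ≥0∞ :=
  if t = 0 then 0
  else if t < (1 / 2) * Real.log (1 + p / σ) then
    ENNReal.ofReal (t / ((1 / 2) * Real.log (1 + p / σ) - t))
  else ⊤

/-- The network delay `D(t, p) = ∑_l h_l(p_l, t_l)`. -/
noncomputable def JNet.Delay (net : JNet) (t p : net.L → ℝ) : ℝ≥0∞ :=
  ∑ l, linkDelay (net.σ l) (p l) (t l)

/-- A minimizer of the joint routing problem: a feasible triple with finite delay
minimizing the delay over all feasible triples. -/
def JNet.IsMinimizer (net : JNet) (t p : net.L → ℝ) (y : net.Q → ℝ) : Prop :=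
  net.Feasible t p y ∧ net.Delay t p < ⊤ ∧
    ∀ t' p' y', net.Feasible t' p' y' → net.Delay t p ≤ net.Delay t' p'

/-- The marginal quantity
`g(p) = (t/(2σ)) · ((1/2)·ln(1 + p/σ) − t)^{−2} · (1 + p/σ)^{−1}`, with the
convention that it is `0` when `t = 0`. -/
noncomputable def gMargJ (t σ p : ℝ) : ℝ :=
  if t = 0 then 0
  else t / (2 * σ) / ((1 / 2) * Real.log (1 + p / σ) - t) ^ 2 / (1 + p / σ)


section AuxJRP
open Filter Set

lemma myHasDerivAt_linkh {σ t p : ℝ} (hσ : 0 < σ) (ht : 0 < t) (hp : 0 < p)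
    (hc : t < (1 / 2) * Real.log (1 + p / σ)) :
    HasDerivAt (fun x => t / ((1 / 2) * Real.log (1 + x / σ) - t)) (-(gMargJ t σ p)) p := by
  have hpos : (0:ℝ) < 1 + p / σ := by positivity
  have h1 : HasDerivAt (fun x : ℝ => 1 + x / σ) (1 / σ) p := by
    simpa using ((hasDerivAt_id p).div_const σ).const_add 1
  have h2 : HasDerivAt (fun x : ℝ => Real.log (1 + x / σ)) ((1 + p / σ)⁻¹ * (1 / σ)) p :=
    by have := (Real.hasDerivAt_log hpos.ne').comp p h1; exact this
  have h3 : HasDerivAt (fun x : ℝ => (1 / 2) * Real.log (1 + x / σ) - t)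
      ((1 / 2) * ((1 + p / σ)⁻¹ * (1 / σ))) p := (h2.const_mul (1 / 2)).sub_const t
  have hne : (1 / 2) * Real.log (1 + p / σ) - t ≠ 0 := by linarith
  have h4 : HasDerivAt (fun x => t / ((1 / 2) * Real.log (1 + x / σ) - t)) _ p :=
    (hasDerivAt_const p t).div h3 hne
  convert h4 using 1
  rw [gMargJ, if_neg ht.ne']
  field_simp
  ring

lemma nonneg_of_hasDerivAt_right {f : ℝ → ℝ} {d : ℝ} (hf : HasDerivAt f d 0)
    (h : ∀ᶠ ε in nhdsWithin 0 (Set.Ioi 0), f 0 ≤ f ε) : 0 ≤ d := by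
  have hs : Tendsto (slope f 0) (nhdsWithin 0 (Set.Ioi 0)) (nhds d) :=
    (hasDerivAt_iff_tendsto_slope.mp hf).mono_left
      (nhdsWithin_mono _ fun x hx => ne_of_gt hx)
  refine ge_of_tendsto hs ?_
  filter_upwards [h, self_mem_nhdsWithin] with ε h1 h2
  have : slope f 0 ε = (f ε - f 0) / ε := by simp [slope_def_field]
  rw [this]
  exact div_nonneg (by linarith) (le_of_lt h2)

lemma nonpos_of_hasDerivAt_left {f : ℝ → ℝ} {d : ℝ} (hf : HasDerivAt f d 0)
    (h : ∀ᶠ ε in nhdsWithin 0 (Set.Iio 0), f 0 ≤ f ε) : d ≤ 0 := by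
  have hs : Tendsto (slope f 0) (nhdsWithin 0 (Set.Iio 0)) (nhds d) :=
    (hasDerivAt_iff_tendsto_slope.mp hf).mono_left
      (nhdsWithin_mono _ fun x hx => ne_of_lt hx)
  refine le_of_tendsto hs ?_
  filter_upwards [h, self_mem_nhdsWithin] with ε h1 h2
  have : slope f 0 ε = (f ε - f 0) / ε := by simp [slope_def_field]
  rw [this]
  exact div_nonpos_of_nonneg_of_nonpos (by linarith) (le_of_lt h2)

lemma log_slack_bound {σ t p : ℝ} (hσ : 0 < σ) (h : σ * (Real.exp (2 * t) - 1) < p) :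
    t < (1 / 2) * Real.log (1 + p / σ) := by
  have h2 : Real.exp (2 * t) - 1 < p / σ := by
    rw [lt_div_iff₀ hσ]; nlinarith
  have hx : (0:ℝ) < 1 + p / σ := by nlinarith [Real.exp_pos (2 * t)]
  have h3 : 2 * t < Real.log (1 + p / σ) :=
    (Real.lt_log_iff_exp_lt hx).mpr (by linarith)
  linarith

lemma sum_ite_sub_real {ι : Type*} [DecidableEq ι] (S : Finset ι) (k l : ι) (c : ℝ) :
    ∑ j ∈ S, ((if j = k then c else 0) - (if j = l then 1 else 0))
      = (if k ∈ S then c else 0) - (if l ∈ S then (1:ℝ) else 0) := by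
  rw [Finset.sum_sub_distrib, Finset.sum_ite_eq' S k (fun _ => c),
    Finset.sum_ite_eq' S l (fun _ => (1:ℝ))]

end AuxJRP

/-- A data path from node `a` to a destination: a nonempty finite sequence of data
links starting at `a`, consecutively matched, and ending at a destination node. -/
def JNet.IsDataPath (net : JNet) (a : net.N) (P : List net.L) : Prop :=
  ∃ hne : P ≠ [],
    net.startD (P.head hne) = a ∧
    net.dest (net.endD (P.getLast hne)) ∧
    P.Chain' (fun l₁ l₂ => net.endD l₁ = net.startD l₂)

/-- At every minimizer `(t*, p*, y*)` of the joint routing problem, for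
every energy link `q` from node `n` to node `m`, and all data links `l` outgoing from
`n` and `k` outgoing from `m` with `p*_l > 0`, `t*_l > 0`, `p*_k > 0`, `t*_k > 0`, one
has `g_l(p*_l) ≥ α_q · g_k(p*_k)`, with equality whenever `y*_q > 0`. -/
theorem joint_minimizer_energy_transfer_condition (net : JNet)
    (tstar pstar : net.L → ℝ) (ystar : net.Q → ℝ)
    (hmin : net.IsMinimizer tstar pstar ystar) :
    ∀ q : net.Q, ∀ l k : net.L,
      net.startD l = net.startE q → net.startD k = net.endE q →
      0 < pstar l → 0 < tstar l → 0 < pstar k → 0 < tstar k →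
      net.α q * gMargJ (tstar k) (net.σ k) (pstar k) ≤
          gMargJ (tstar l) (net.σ l) (pstar l) ∧
        (0 < ystar q →
          gMargJ (tstar l) (net.σ l) (pstar l) =
            net.α q * gMargJ (tstar k) (net.σ k) (pstar k)) := by
  classical
  obtain ⟨⟨ht0, hcap, hy0, henergy, hflow⟩, hfin, hopt⟩ := hmin
  intro q l k hl hk hpl htl hpk htk
  -- finiteness of each link delay
  have hfinlink : ∀ j, 0 < tstar j →
      tstar j < (1 / 2) * Real.log (1 + pstar j / net.σ j) := by
    intro j hj
    by_contra hle
    push_neg at hle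
    have htop : linkDelay (net.σ j) (pstar j) (tstar j) = ⊤ := by
      rw [linkDelay, if_neg hj.ne', if_neg (not_lt.mpr hle)]
    have hle2 : linkDelay (net.σ j) (pstar j) (tstar j) ≤ net.Delay tstar pstar := by
      rw [JNet.Delay]
      exact Finset.single_le_sum (f := fun i => linkDelay (net.σ i) (pstar i) (tstar i))
        (fun _ _ => zero_le) (Finset.mem_univ j)
    rw [htop, top_le_iff] at hle2
    exact absurd hle2 (ne_of_lt hfin)
  have hslack : ∀ j, 0 < tstar j →
      net.σ j * (Real.exp (2 * tstar j) - 1) < pstar j := by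
    intro j hj
    have h1 := hfinlink j hj
    have hσj := net.hσ j
    have hppos : 0 < pstar j := by
      have hcapj := hcap j
      have hexp : (1:ℝ) < Real.exp (2 * tstar j) := by
        rw [show (1:ℝ) = Real.exp 0 by simp]
        exact Real.exp_lt_exp.mpr (by linarith)
      nlinarith
    have hx : (0:ℝ) < 1 + pstar j / net.σ j := by positivity
    have h3 : Real.exp (2 * tstar j) < 1 + pstar j / net.σ j := by
      rw [← Real.lt_log_iff_exp_lt hx]; linarith
    have h4 : Real.exp (2 * tstar j) - 1 < pstar j / net.σ j := by linarith
    rw [lt_div_iff₀ hσj] at h4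
    nlinarith
  obtain ⟨hα1, hα2⟩ := net.hα q
  set a : net.L → ℝ := fun j => (if j = k then net.α q else 0) - (if j = l then 1 else 0)
    with ha_def
  set δl := pstar l - net.σ l * (Real.exp (2 * tstar l) - 1) with hδl_def
  set δk := pstar k - net.σ k * (Real.exp (2 * tstar k) - 1) with hδk_def
  have hδl : 0 < δl := sub_pos.mpr (hslack l htl)
  have hδk : 0 < δk := sub_pos.mpr (hslack k htk)
  set δ := min δl δk with hδ_def
  have hδ : 0 < δ := lt_min hδl hδk
  have habs : ∀ j, |a j| ≤ 1 := by
    intro j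
    rw [ha_def, abs_le]
    constructor <;> dsimp only <;> split_ifs <;> norm_num <;> linarith
  have hane : ∀ j, j ≠ l → j ≠ k → a j = 0 := by
    intro j hjl hjk; rw [ha_def]; simp [hjl, hjk]
  set p' : ℝ → net.L → ℝ := fun ε j => pstar j + ε * a j with hp'_def
  set y' : ℝ → net.Q → ℝ := fun ε r => ystar r + ε * (if r = q then 1 else 0) with hy'_def
  have hp0 : p' 0 = pstar := by funext j; simp [hp'_def]
  -- perturbation bound
  have hea : ∀ (ε : ℝ), |ε| < δ → ∀ j, -δ < ε * a j := by
    intro ε hε j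
    have h1 : |ε * a j| ≤ |ε| := by
      rw [abs_mul]
      nlinarith [habs j, abs_nonneg ε, abs_nonneg (a j)]
    have h2 := neg_abs_le (ε * a j)
    linarith
  have hcapstrict : ∀ (ε : ℝ), |ε| < δ → ∀ j, 0 < tstar j →
      net.σ j * (Real.exp (2 * tstar j) - 1) < p' ε j := by
    intro ε hε j hj
    by_cases hjlk : j = l ∨ j = k
    · have hslackj : δ ≤ pstar j - net.σ j * (Real.exp (2 * tstar j) - 1) := by
        rcases hjlk with rfl | rfl
        · exact min_le_left δl δk
        · exact min_le_right δl δk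
      have := hea ε hε j
      show net.σ j * (Real.exp (2 * tstar j) - 1) < pstar j + ε * a j
      linarith
    · push_neg at hjlk
      have h0 := hane j hjlk.1 hjlk.2
      show net.σ j * (Real.exp (2 * tstar j) - 1) < pstar j + ε * a j
      rw [h0]
      have := hslack j hj
      linarith
  have hcap' : ∀ (ε : ℝ), |ε| < δ → ∀ j,
      net.σ j * (Real.exp (2 * tstar j) - 1) ≤ p' ε j := by
    intro ε hε j
    rcases eq_or_lt_of_le (ht0 j) with hz | hz
    · by_cases hjlk : j = l ∨ j = k
      · rcases hjlk with rfl | rfl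
        · exact absurd hz.symm htl.ne'
        · exact absurd hz.symm htk.ne'
      · push_neg at hjlk
        show net.σ j * (Real.exp (2 * tstar j) - 1) ≤ pstar j + ε * a j
        rw [hane j hjlk.1 hjlk.2]
        have := hcap j
        linarith
    · exact (hcapstrict ε hε j hz).le
  have hstrict : ∀ (ε : ℝ), |ε| < δ → ∀ j, 0 < tstar j →
      tstar j < (1 / 2) * Real.log (1 + p' ε j / net.σ j) :=
    fun ε hε j hj => log_slack_bound (net.hσ j) (hcapstrict ε hε j hj)
  -- feasibility of the perturbed triple
  have hfeas : ∀ (ε : ℝ), |ε| < δ → 0 ≤ ystar q + ε →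
      net.Feasible tstar (p' ε) (y' ε) := by
    intro ε hε hyq
    refine ⟨ht0, hcap' ε hε, ?_, ?_, hflow⟩
    · intro r
      by_cases hr : r = q
      · subst hr
        show 0 ≤ ystar r + ε * (if r = r then 1 else 0)
        simpa using hyq
      · show 0 ≤ ystar r + ε * (if r = q then 1 else 0)
        simp only [if_neg hr, mul_zero, add_zero]
        exact hy0 r
    · intro n
      have hS1 : (∑ j ∈ Finset.univ.filter (fun j => net.startD j = n), p' ε j)
          = (∑ j ∈ Finset.univ.filter (fun j => net.startD j = n), pstar j)
            + ε * ((if net.endE q = n then net.α q else 0)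
              - (if net.startE q = n then 1 else 0)) := by
        show (∑ j ∈ Finset.univ.filter (fun j => net.startD j = n), (pstar j + ε * a j)) = _
        rw [Finset.sum_add_distrib, ← Finset.mul_sum]
        congr 2
        rw [ha_def]
        rw [sum_ite_sub_real]
        simp only [Finset.mem_filter, Finset.mem_univ, true_and, hk, hl]
      have hS2 : (∑ r ∈ Finset.univ.filter (fun r => net.startE r = n), y' ε r)
          = (∑ r ∈ Finset.univ.filter (fun r => net.startE r = n), ystar r)
            + ε * (if net.startE q = n then 1 else 0) := by
        show (∑ r ∈ Finset.univ.filter (fun r => net.startE r = n),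
          (ystar r + ε * (if r = q then 1 else 0))) = _
        rw [Finset.sum_add_distrib, ← Finset.mul_sum]
        congr 2
        rw [Finset.sum_ite_eq' _ q (fun _ => (1:ℝ))]
        simp only [Finset.mem_filter, Finset.mem_univ, true_and]
      have hS3 : (∑ r ∈ Finset.univ.filter (fun r => net.endE r = n), net.α r * y' ε r)
          = (∑ r ∈ Finset.univ.filter (fun r => net.endE r = n), net.α r * ystar r)
            + ε * (if net.endE q = n then net.α q else 0) := by
        show (∑ r ∈ Finset.univ.filter (fun r => net.endE r = n),
          net.α r * (ystar r + ε * (if r = q then 1 else 0))) = _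
        have : ∀ r, net.α r * (ystar r + ε * (if r = q then 1 else 0))
            = net.α r * ystar r + ε * (if r = q then net.α r else 0) := by
          intro r; split_ifs <;> ring
        simp only [this]
        rw [Finset.sum_add_distrib, ← Finset.mul_sum]
        congr 2
        rw [Finset.sum_ite_eq' _ q (fun r => net.α r)]
        simp only [Finset.mem_filter, Finset.mem_univ, true_and]
      rw [hS1, hS2, hS3]
      have := henergy n
      linarith
  -- the real-valued delay
  set φ : ℝ → ℝ := fun ε => ∑ j,
    tstar j / ((1 / 2) * Real.log (1 + p' ε j / net.σ j) - tstar j) with hφ_def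
  have hφnonneg : ∀ (ε : ℝ), |ε| < δ → ∀ j : net.L,
      0 ≤ tstar j / ((1 / 2) * Real.log (1 + p' ε j / net.σ j) - tstar j) := by
    intro ε hε j
    rcases eq_or_lt_of_le (ht0 j) with hz | hz
    · rw [← hz]; simp
    · exact le_of_lt (div_pos hz (by have := hstrict ε hε j hz; linarith))
  have hval : ∀ (ε : ℝ), |ε| < δ →
      net.Delay tstar (p' ε) = ENNReal.ofReal (φ ε) := by
    intro ε hε
    rw [hφ_def]
    rw [JNet.Delay, ENNReal.ofReal_sum_of_nonneg (fun j _ => hφnonneg ε hε j)]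
    refine Finset.sum_congr rfl fun j _ => ?_
    rcases eq_or_lt_of_le (ht0 j) with hz | hz
    · rw [linkDelay, if_pos hz.symm, ← hz]; simp
    · rw [linkDelay, if_neg hz.ne', if_pos (hstrict ε hε j hz)]
  have hmono : ∀ (ε : ℝ), |ε| < δ → 0 ≤ ystar q + ε → φ 0 ≤ φ ε := by
    intro ε hε hyq
    have h0 : |(0:ℝ)| < δ := by simpa using hδ
    have h1 : net.Delay tstar (p' 0) ≤ net.Delay tstar (p' ε) := by
      rw [hp0]
      exact hopt tstar (p' ε) (y' ε) (hfeas ε hε hyq)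
    rw [hval 0 h0, hval ε hε] at h1
    rw [ENNReal.ofReal_le_ofReal_iff
      (Finset.sum_nonneg fun j _ => hφnonneg ε hε j)] at h1
    exact h1
  -- derivative of φ at 0
  have hderiv : HasDerivAt φ
      (gMargJ (tstar l) (net.σ l) (pstar l)
        - net.α q * gMargJ (tstar k) (net.σ k) (pstar k)) 0 := by
    have hterm : ∀ j : net.L, HasDerivAt
        (fun ε : ℝ => tstar j / ((1 / 2) * Real.log (1 + p' ε j / net.σ j) - tstar j))
        (a j * (-(gMargJ (tstar j) (net.σ j) (pstar j)))) 0 := by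
      intro j
      by_cases hja : a j = 0
      · have hconst : (fun ε : ℝ =>
            tstar j / ((1 / 2) * Real.log (1 + p' ε j / net.σ j) - tstar j))
            = fun _ : ℝ =>
              tstar j / ((1 / 2) * Real.log (1 + pstar j / net.σ j) - tstar j) := by
          funext ε; rw [hp'_def]; simp [hja]
        rw [hconst, hja, zero_mul]
        exact hasDerivAt_const 0 _
      · have hj : j = l ∨ j = k := by
          by_contra hc; push_neg at hc; exact hja (hane j hc.1 hc.2)
        have htj : 0 < tstar j := by rcases hj with rfl | rfl; exacts [htl, htk]
        have hpj : 0 < pstar j := by rcases hj with rfl | rfl; exacts [hpl, hpk]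
        have hmain := myHasDerivAt_linkh (net.hσ j) htj hpj (hfinlink j htj)
        have hinner : HasDerivAt (fun ε : ℝ => pstar j + ε * a j) (a j) 0 := by
          simpa using ((hasDerivAt_id (0:ℝ)).mul_const (a j)).const_add (pstar j)
        have hmain' : HasDerivAt
            (fun x => tstar j / ((1 / 2) * Real.log (1 + x / net.σ j) - tstar j))
            (-(gMargJ (tstar j) (net.σ j) (pstar j)))
            ((fun ε : ℝ => pstar j + ε * a j) 0) := by
          simpa using hmain
        have hcomp := hmain'.comp 0 hinner
        have : (fun x => tstar j / ((1 / 2) * Real.log (1 + x / net.σ j) - tstar j))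
            ∘ (fun ε : ℝ => pstar j + ε * a j)
            = fun ε : ℝ =>
              tstar j / ((1 / 2) * Real.log (1 + p' ε j / net.σ j) - tstar j) := by
          funext ε; simp [Function.comp, hp'_def]
        rw [this] at hcomp
        convert hcomp using 1
        exacts [rfl, rfl, by ring]
    have hsum := HasDerivAt.fun_sum (fun j (_ : j ∈ Finset.univ) => hterm j)
    have hφd : HasDerivAt φ
        (∑ j, a j * (-(gMargJ (tstar j) (net.σ j) (pstar j)))) 0 := by
      rw [hφ_def]; exact hsum
    convert hφd using 1
    rw [ha_def]
    simp only [sub_mul, ite_mul, zero_mul, one_mul]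
    rw [Finset.sum_sub_distrib,
      Finset.sum_ite_eq' Finset.univ k
        (fun j => net.α q * (-(gMargJ (tstar j) (net.σ j) (pstar j)))),
      Finset.sum_ite_eq' Finset.univ l
        (fun j => -(gMargJ (tstar j) (net.σ j) (pstar j)))]
    simp only [Finset.mem_univ, if_true]
    ring
  -- conclude via one-sided derivative tests
  have hge : 0 ≤ gMargJ (tstar l) (net.σ l) (pstar l)
      - net.α q * gMargJ (tstar k) (net.σ k) (pstar k) := by
    refine nonneg_of_hasDerivAt_right hderiv ?_
    have hmem : Set.Ioo (0:ℝ) δ ∈ nhdsWithin (0:ℝ) (Set.Ioi 0) :=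
      Ioo_mem_nhdsGT_of_mem ⟨le_refl 0, hδ⟩
    filter_upwards [hmem] with ε hε
    exact hmono ε (by rw [abs_of_pos hε.1]; exact hε.2)
      (by have := hy0 q; linarith [hε.1])
  refine ⟨by linarith, fun hyq => ?_⟩
  have hle : gMargJ (tstar l) (net.σ l) (pstar l)
      - net.α q * gMargJ (tstar k) (net.σ k) (pstar k) ≤ 0 := by
    refine nonpos_of_hasDerivAt_left hderiv ?_
    have hm : 0 < min δ (ystar q) := lt_min hδ hyq
    have hmem : Set.Ioo (-(min δ (ystar q))) (0:ℝ) ∈ nhdsWithin (0:ℝ) (Set.Iio 0) :=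
      Ioo_mem_nhdsLT_of_mem ⟨by linarith, le_refl 0⟩
    filter_upwards [hmem] with ε hε
    have h1 : |ε| < δ := by
      rw [abs_of_neg hε.2]
      have := min_le_left δ (ystar q)
      linarith [hε.1]
    have h2 : 0 ≤ ystar q + ε := by
      have := min_le_right δ (ystar q)
      linarith [hε.1]
    exact hmono ε h1 h2
  linarith
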